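/- Every unicyclic graph G (a connected graph containing exactly one cycle) satisfies χ'_o(G) ≤ 3. -/

import Mathlib

open SimpleGraph Finset

variable {V : Type*} [Fintype V] [DecidableEq V]

/-- Number of edges incident to `v` receiving color `i` under the edge-coloring `f`. -/
def colorCount (G : SimpleGraph V) [DecidableRel G.Adj] {k : ℕ}
    (f : Sym2 V → Fin k) (v : V) (i : Fin k) : ℕ :=
  ((G.incidenceFinset v).filter (fun e => f e = i)).card

/-- The edge-coloring `f` is odd at the vertex `v`: every color appearing at `v`
appears an odd number of times at `v`. -/
def OddAt (G : SimpleGraph V) [DecidableRel G.Adj] {k : ℕ}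
    (f : Sym2 V → Fin k) (v : V) : Prop :=
  ∀ i : Fin k, colorCount G f v i = 0 ∨ Odd (colorCount G f v i)

/-- An odd edge-coloring: odd at every vertex. -/
def IsOddColoring (G : SimpleGraph V) [DecidableRel G.Adj] {k : ℕ}
    (f : Sym2 V → Fin k) : Prop :=
  ∀ v : V, OddAt G f v

/-- The odd chromatic index: least `k` admitting an odd `k`-edge-coloring. -/
noncomputable def oddChromIndex (G : SimpleGraph V) [DecidableRel G.Adj] : ℕ :=
  sInf {k | ∃ f : Sym2 V → Fin k, IsOddColoring G f}

/-- Auxiliary recursion assigning a color in `Fin 2` to each vertex (meaning: the color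
of the edge from that vertex to its parent), by recursion on depth. -/
def treeColorAux (π : V → V) (k : V → ℕ) (r : V) : ℕ → V → Fin 2
  | 0, _ => 0
  | (n+1), v =>
    if π v = r then 0
    else if Even (k (π v)) then treeColorAux π k r n (π v)
    else 1 - treeColorAux π k r n (π v)

lemma fin2_ne_one_sub : ∀ a : Fin 2, a ≠ 1 - a := by decide

lemma fin2_cover : ∀ a i : Fin 2, i = a ∨ i = 1 - a := by decide

/-- Every connected graph with `|V| - 1` edges (i.e. every tree) has an odd 2-edge-coloring. -/
lemma tree_coloring (T : SimpleGraph V) [DecidableRel T.Adj] (hc : T.Connected)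
    (hcard : T.edgeFinset.card + 1 = Fintype.card V) :
    ∃ g : Sym2 V → Fin 2, IsOddColoring T g := by
  by_cases hV : Fintype.card V ≤ 1
  · -- no edges at all
    refine ⟨fun _ => 0, fun v i => Or.inl ?_⟩
    have h0 : T.edgeFinset = ∅ := Finset.card_eq_zero.mp (by omega)
    rw [colorCount, incidenceFinset_eq_filter, h0]
    simp
  push_neg at hV
  -- a vertex of degree one
  have hdpos : ∀ v : V, 0 < T.degree v := by
    intro v
    obtain ⟨w, hw⟩ := Fintype.exists_ne_of_one_lt_card hV v
    rw [degree_pos_iff_exists_adj]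
    obtain ⟨p⟩ := hc.preconnected v w
    cases p with
    | nil => exact absurd rfl hw
    | cons h q => exact ⟨_, h⟩
  have hdsum := T.sum_degrees_eq_twice_card_edges
  have hleaf : ∃ r : V, T.degree r = 1 := by
    by_contra h
    push_neg at h
    have h2 : ∀ v : V, 2 ≤ T.degree v := by
      intro v
      have := hdpos v
      have := h v
      omega
    have hsum : Fintype.card V • 2 ≤ ∑ v, T.degree v := by
      rw [← Finset.card_univ]
      exact Finset.card_nsmul_le_sum _ _ _ (fun v _ => h2 v)
    simp only [smul_eq_mul] at hsum
    omega
  obtain ⟨r, hr⟩ := hleaf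
  -- parent function
  have hpar : ∀ v : V, ∃ w, (v ≠ r → T.Adj v w ∧ T.dist w r + 1 = T.dist v r) := by
    intro v
    by_cases hv : v = r
    · exact ⟨r, fun h => absurd hv h⟩
    · obtain ⟨p, hp⟩ := (hc.preconnected v r).exists_walk_length_eq_dist
      cases p with
      | nil => exact absurd rfl hv
      | @cons _ w _ h q =>
        refine ⟨w, fun _ => ⟨h, ?_⟩⟩
        have h1 : T.dist w r ≤ q.length := dist_le q
        have h2 : T.dist v r ≤ T.dist v w + T.dist w r := hc.dist_triangle
        have h3 : T.dist v w = 1 := dist_eq_one_iff_adj.mpr h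
        rw [Walk.length_cons] at hp
        omega
  choose π hπ using hpar
  have hπadj : ∀ v, v ≠ r → T.Adj v (π v) := fun v h => (hπ v h).1
  have hπd : ∀ v, v ≠ r → T.dist (π v) r + 1 = T.dist v r := fun v h => (hπ v h).2
  -- every edge is a parent edge
  have hinj : ∀ v w : V, v ≠ r → w ≠ r → s(v, π v) = s(w, π w) → v = w := by
    intro v w hv hw he
    rw [Sym2.eq_iff] at he
    rcases he with ⟨h1, _⟩ | ⟨h1, h2⟩
    · exact h1
    · exfalso
      have a1 := hπd v hv
      have a2 := hπd w hw
      rw [h2] at a1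
      rw [← h1] at a2
      omega
  have himage : (Finset.univ.erase r).image (fun v => s(v, π v)) = T.edgeFinset := by
    apply Finset.eq_of_subset_of_card_le
    · intro e he
      simp only [Finset.mem_image, Finset.mem_erase, Finset.mem_univ, and_true] at he
      obtain ⟨v, hv, rfl⟩ := he
      exact mem_edgeFinset.mpr (hπadj v hv)
    · rw [Finset.card_image_of_injOn (fun v hv w hw h =>
        hinj v w (Finset.mem_erase.mp hv).1 (Finset.mem_erase.mp hw).1 h)]
      rw [Finset.card_erase_of_mem (Finset.mem_univ r), Finset.card_univ]
      omega
  have hedge : ∀ e ∈ T.edgeFinset, ∃ v, v ≠ r ∧ e = s(v, π v) := by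
    intro e he
    rw [← himage] at he
    simp only [Finset.mem_image, Finset.mem_erase, Finset.mem_univ, and_true] at he
    obtain ⟨v, hv, rfl⟩ := he
    exact ⟨v, hv, rfl⟩
  -- children
  set ch : V → Finset V := fun u => Finset.univ.filter (fun w => w ≠ r ∧ π w = u) with hch
  set k : V → ℕ := fun u => (ch u).card with hk
  set c : V → Fin 2 := fun v => treeColorAux π k r (T.dist v r) v with hcdef
  have hc_r : ∀ w, w ≠ r → π w = r → c w = 0 := by
    intro w hw hpw
    have hdw : T.dist w r = T.dist (π w) r + 1 := (hπd w hw).symm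
    rw [hpw, SimpleGraph.dist_self] at hdw
    show treeColorAux π k r (T.dist w r) w = 0
    rw [hdw]
    simp [treeColorAux, hpw]
  have hc_child : ∀ w, w ≠ r → π w ≠ r →
      c w = if Even (k (π w)) then c (π w) else 1 - c (π w) := by
    intro w hw hpw
    have hdw : T.dist w r = T.dist (π w) r + 1 := (hπd w hw).symm
    show treeColorAux π k r (T.dist w r) w = _
    rw [hdw]
    show (if π w = r then 0
      else if Even (k (π w)) then treeColorAux π k r (T.dist (π w) r) (π w)
      else 1 - treeColorAux π k r (T.dist (π w) r) (π w)) = _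
    rw [if_neg hpw]
  -- the edge coloring
  have gsymm : ∀ a b : V,
      (if T.dist a r < T.dist b r then c b else if T.dist b r < T.dist a r then c a else 0) =
      (if T.dist b r < T.dist a r then c a else if T.dist a r < T.dist b r then c b else 0) := by
    intro a b
    split_ifs <;> first | rfl | omega
  set g : Sym2 V → Fin 2 := Sym2.lift ⟨fun a b =>
    if T.dist a r < T.dist b r then c b else if T.dist b r < T.dist a r then c a else 0,
    gsymm⟩ with hgdef
  have hg_edge : ∀ v, v ≠ r → g s(v, π v) = c v := by
    intro v hv
    have h1 : T.dist (π v) r < T.dist v r := by have := hπd v hv; omega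
    show (if T.dist v r < T.dist (π v) r then c (π v)
      else if T.dist (π v) r < T.dist v r then c v else 0) = c v
    rw [if_neg (by omega), if_pos h1]
  -- incidence sets
  have hP : ∀ u : V, T.incidenceFinset u =
      (Finset.univ.filter (fun v => v ≠ r ∧ (v = u ∨ π v = u))).image (fun v => s(v, π v)) := by
    intro u
    ext e
    rw [incidenceFinset_eq_filter, Finset.mem_filter]
    constructor
    · rintro ⟨he, hue⟩
      obtain ⟨v, hv, rfl⟩ := hedge e he
      refine Finset.mem_image.mpr ⟨v, Finset.mem_filter.mpr ⟨Finset.mem_univ v, hv, ?_⟩, rfl⟩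
      rcases Sym2.mem_iff.mp hue with h | h
      · exact Or.inl h.symm
      · exact Or.inr h.symm
    · rintro h
      obtain ⟨v, hv, rfl⟩ := Finset.mem_image.mp h
      rw [Finset.mem_filter] at hv
      obtain ⟨-, hvr, hvu⟩ := hv
      refine ⟨mem_edgeFinset.mpr (hπadj v hvr), Sym2.mem_iff.mpr ?_⟩
      rcases hvu with rfl | h
      · exact Or.inl rfl
      · exact Or.inr h.symm
  have hcount : ∀ u i, colorCount T g u i =
      ((Finset.univ.filter (fun v => v ≠ r ∧ (v = u ∨ π v = u))).filter
        (fun v => c v = i)).card := by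
    intro u i
    rw [colorCount, hP u, Finset.filter_image,
      Finset.card_image_of_injOn (fun v hv w hw h =>
        hinj v w (Finset.mem_filter.mp (Finset.mem_filter.mp hv).1).2.1
          (Finset.mem_filter.mp (Finset.mem_filter.mp hw).1).2.1 h)]
    congr 1
    apply Finset.filter_congr
    intro v hv
    rw [Finset.mem_filter] at hv
    rw [hg_edge v hv.2.1]
  -- number of children of the root
  have hPr : Finset.univ.filter (fun v => v ≠ r ∧ (v = r ∨ π v = r)) = ch r := by
    ext v
    simp only [hch, Finset.mem_filter, Finset.mem_univ, true_and]
    tauto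
  have hkr : (ch r).card = 1 := by
    have h1 : T.incidenceFinset r = (ch r).image (fun v => s(v, π v)) := by
      rw [hP r, hPr]
    have h2 := T.card_incidenceFinset_eq_degree (v := r)
    rw [h1, Finset.card_image_of_injOn (fun v hv w hw h =>
      hinj v w (Finset.mem_filter.mp hv).2.1 (Finset.mem_filter.mp hw).2.1 h)] at h2
    rw [h2, hr]
  refine ⟨g, fun u i => ?_⟩
  rw [hcount u i]
  by_cases hur : u = r
  · rw [hur]
    rw [hPr]
    have hall : ∀ w ∈ ch r, c w = 0 := by
      intro w hw
      rw [hch, Finset.mem_filter] at hw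
      exact hc_r w hw.2.1 hw.2.2
    by_cases hi : i = 0
    · subst hi
      right
      rw [Finset.filter_true_of_mem (fun w hw => hall w hw), hkr]
      exact odd_one
    · left
      rw [Finset.filter_false_of_mem, Finset.card_empty]
      intro w hw h
      exact hi ((hall w hw) ▸ h.symm) 
  · have hsplit : Finset.univ.filter (fun v => v ≠ r ∧ (v = u ∨ π v = u)) = insert u (ch u) := by
      ext v
      simp only [hch, Finset.mem_filter, Finset.mem_univ, true_and, Finset.mem_insert]
      constructor
      · rintro ⟨h1, rfl | h2⟩
        · exact Or.inl rfl
        · exact Or.inr ⟨h1, h2⟩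
      · rintro (rfl | ⟨h1, h2⟩)
        · exact ⟨hur, Or.inl rfl⟩
        · exact ⟨h1, Or.inr h2⟩
    have hnotmem : u ∉ ch u := by
      rw [hch, Finset.mem_filter]
      rintro ⟨-, -, h⟩
      exact (hπadj u hur).ne h.symm
    have hchval : ∀ w ∈ ch u, c w = if Even (k u) then c u else 1 - c u := by
      intro w hw
      rw [hch, Finset.mem_filter] at hw
      obtain ⟨-, hwr, hwu⟩ := hw
      rw [hc_child w hwr (hwu ▸ hur), hwu]
    rw [hsplit, Finset.filter_insert]
    have hm : ((ch u).filter (fun v => c v = i)).card =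
        if (if Even (k u) then c u else 1 - c u) = i then k u else 0 := by
      by_cases hcase : (if Even (k u) then c u else 1 - c u) = i
      · rw [if_pos hcase, Finset.filter_true_of_mem (fun w hw => (hchval w hw).trans hcase)]
      · rw [if_neg hcase, Finset.filter_false_of_mem, Finset.card_empty]
        intro w hw h
        exact hcase ((hchval w hw) ▸ h)
    by_cases hcu : c u = i
    · rw [if_pos hcu, Finset.card_insert_of_notMem
        (fun h => hnotmem (Finset.mem_of_mem_filter u h)), hm]
      right
      by_cases hek : Even (k u)
      · rw [if_pos (by rw [if_pos hek]; exact hcu)]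
        exact hek.add_one
      · rw [if_neg (by rw [if_neg hek, ← hcu]; exact (fin2_ne_one_sub (c u)).symm)]
        exact odd_one
    · rw [if_neg hcu, hm]
      by_cases hek : Even (k u)
      · left
        rw [if_neg (by rw [if_pos hek]; exact hcu)]
      · have hiv : i = 1 - c u := by
          rcases fin2_cover (c u) i with h | h
          · exact absurd h.symm hcu
          · exact h
        right
        rw [if_pos (by rw [if_neg hek]; exact hiv.symm)]
        exact Nat.not_even_iff_odd.mp hek

theorem unicyclic_oddChromIndex_le_three (G : SimpleGraph V) [DecidableRel G.Adj]
    (hG : G.Connected) (hUni : G.edgeFinset.card = Fintype.card V) :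
    oddChromIndex G ≤ 3 := by
  haveI : Nonempty V := hG.nonempty
  have hn : 1 ≤ Fintype.card V := Fintype.card_pos
  -- G is not acyclic, so it has a non-bridge edge
  have hnac : ¬ G.IsAcyclic := by
    intro h
    have ht : G.IsTree := ⟨hG, h⟩
    have := ht.card_edgeFinset
    omega
  rw [isAcyclic_iff_forall_edge_isBridge] at hnac
  push_neg at hnac
  obtain ⟨e, he, hbr⟩ := hnac
  induction e using Sym2.ind with
  | _ a b =>
  have hab : G.Adj a b := G.mem_edgeSet.mp he
  rw [isBridge_iff] at hbr
  have hre : (G \ fromEdgeSet {s(a, b)}).Reachable a b :=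
    not_not.mp (fun h => hbr h)
  set G' := G \ fromEdgeSet {s(a, b)} with hG'
  have hG'adj : ∀ x y, G'.Adj x y ↔ G.Adj x y ∧ s(x, y) ≠ s(a, b) := by
    intro x y
    rw [hG', sdiff_adj, fromEdgeSet_adj]
    constructor
    · rintro ⟨h1, h2⟩
      exact ⟨h1, fun he' => h2 ⟨Set.mem_singleton_iff.mpr he', h1.ne⟩⟩
    · rintro ⟨h1, h2⟩
      exact ⟨h1, fun hx => h2 (Set.mem_singleton_iff.mp hx.1)⟩
  haveI hdec : DecidableRel G'.Adj := fun x y =>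
    decidable_of_iff (G.Adj x y ∧ s(x, y) ≠ s(a, b)) (hG'adj x y).symm
  have hG'conn : G'.Connected := by
    rw [connected_iff]
    refine ⟨?_, ⟨Classical.arbitrary V⟩⟩
    intro u v
    obtain ⟨p⟩ := hG.preconnected u v
    induction p with
    | nil => exact Reachable.refl _
    | @cons x y _ h q ih =>
      refine Reachable.trans ?_ ih
      by_cases hxy : s(x, y) = s(a, b)
      · rcases Sym2.eq_iff.mp hxy with ⟨rfl, rfl⟩ | ⟨rfl, rfl⟩
        · exact hre
        · exact hre.symm
      · exact ((hG'adj _ _).mpr ⟨h, hxy⟩).reachable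
  have hE'set : G'.edgeSet = G.edgeSet \ {s(a, b)} := by
    rw [hG', edgeSet_sdiff, edgeSet_fromEdgeSet]
    ext x
    simp only [Set.mem_diff, Set.mem_singleton_iff, Set.mem_setOf_eq]
    constructor
    · rintro ⟨h1, h2⟩
      exact ⟨h1, fun hx => h2 ⟨hx, by rw [hx]; exact Sym2.mk_isDiag_iff.not.mpr hab.ne⟩⟩
    · rintro ⟨h1, h2⟩
      exact ⟨h1, fun hx => h2 hx.1⟩
  clear_value G'
  clear hG' hbr
  have he0 : s(a, b) ∈ G.edgeFinset := mem_edgeFinset.mpr hab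
  have hEdge' : G'.edgeFinset = G.edgeFinset.erase s(a, b) := by
    ext x
    rw [mem_edgeFinset, Finset.mem_erase, mem_edgeFinset, hE'set]
    simp only [Set.mem_diff, Set.mem_singleton_iff]
    tauto
  obtain ⟨g, hg⟩ := tree_coloring G' hG'conn
    (by rw [hEdge', Finset.card_erase_of_mem he0, hUni]; omega)
  set f : Sym2 V → Fin 3 := fun e => if e = s(a, b) then 2 else (g e).castSucc with hf
  have hinc : ∀ v, G'.incidenceFinset v = (G.incidenceFinset v).erase s(a, b) := by
    intro v
    ext x
    rw [incidenceFinset_eq_filter, incidenceFinset_eq_filter, hEdge', Finset.mem_erase,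
      Finset.mem_filter, Finset.mem_filter, Finset.mem_erase]
    tauto
  have hodd : IsOddColoring G f := by
    intro v i
    induction i using Fin.lastCases with
    | last =>
      have hiff : ∀ x, f x = Fin.last 2 ↔ x = s(a, b) := by
        intro x
        simp only [hf]
        split_ifs with h
        · simp [h]
        · simp only [h, iff_false]
          exact (Fin.castSucc_lt_last (g x)).ne
      have : (G.incidenceFinset v).filter (fun x => f x = Fin.last 2) =
          (G.incidenceFinset v).filter (fun x => x = s(a, b)) :=
        Finset.filter_congr (fun x _ => by rw [hiff x])
      rw [colorCount, this, Finset.filter_eq']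
      split_ifs
      · right; simp
      · left; simp
    | cast j =>
      have hiff : ∀ x, f x = j.castSucc ↔ (x ≠ s(a, b) ∧ g x = j) := by
        intro x
        simp only [hf]
        split_ifs with h
        · constructor
          · intro h2
            exact absurd h2.symm (Fin.castSucc_lt_last j).ne
          · rintro ⟨h2, -⟩
            exact absurd h h2
        · rw [Fin.castSucc_inj]
          simp [h]
      have hcc : colorCount G f v j.castSucc = colorCount G' g v j := by
        rw [colorCount, colorCount, hinc v]
        congr 1
        ext x
        rw [Finset.mem_filter, Finset.mem_filter, Finset.mem_erase, hiff x]
        tauto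
      rw [hcc]
      exact hg v j
  exact Nat.sInf_le ⟨f, hodd⟩
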